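/- Let N ≥ 1 and n ≥ 0 be natural numbers and let A ⊆ ℕ be a finite set such that for every j with 0 ≤ j ≤ N − 1, the set A ∩ (j + Nℤ) has at least n + 1 elements. Then for every ℓ ∈ ℕ there exist rational constants c_{ℓ,k} (k ∈ A), depending only on N, n, A and ℓ, such that every F ∈ ℚ⟦X⟧ for which (1 − X^N)^{n+1} · F is a polynomial of degree < N(n+1) satisfies coeff_ℓ F = ∑_{k ∈ A} c_{ℓ,k} · coeff_k F. (The combinatorial core of Theorem 1.1 of the paper: the finitely many coefficients indexed by A determine all coefficients by a fixed linear expression.) -/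

import Mathlib

open PowerSeries Finset

namespace FSDCaux

noncomputable def G (N n : ℕ) : PowerSeries ℚ :=
  PowerSeries.mk fun t => if N ∣ t then ((t / N + n).choose n : ℚ) else 0

lemma coeff_G (N n t : ℕ) :
    (PowerSeries.coeff (R := ℚ) t) (G N n) = if N ∣ t then ((t / N + n).choose n : ℚ) else 0 :=
  PowerSeries.coeff_mk _ _

lemma coeff_one_sub_pow_mul (N t : ℕ) (φ : PowerSeries ℚ) :
    PowerSeries.coeff (R := ℚ) t ((1 - X ^ N) * φ) =
      PowerSeries.coeff (R := ℚ) t φ - if N ≤ t then PowerSeries.coeff (R := ℚ) (t - N) φ else 0 := by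
  rw [sub_mul, one_mul, map_sub, PowerSeries.coeff_X_pow_mul']

lemma base (N : ℕ) (hN : 1 ≤ N) : (1 - X ^ N) * G N 0 = 1 := by
  ext t
  rw [coeff_one_sub_pow_mul, PowerSeries.coeff_one, coeff_G, coeff_G]
  simp only [Nat.choose_zero_right, Nat.cast_one]
  by_cases h : N ∣ t
  · rcases h with ⟨m, rfl⟩
    rcases m with _ | m'
    · rw [Nat.mul_zero]
      rw [if_pos (dvd_zero N), if_neg (by omega : ¬ N ≤ 0), if_pos rfl]
      ring
    · have hms : N * (m' + 1) = N * m' + N := by ring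
      have h1 : N ≤ N * (m' + 1) := by omega
      have hsub : N * (m' + 1) - N = N * m' := by omega
      have h2 : N ∣ N * (m' + 1) - N := hsub ▸ dvd_mul_right N m'
      rw [if_pos (dvd_mul_right N (m' + 1)), if_pos h1, if_pos h2,
        if_neg (by omega : ¬ (N * (m' + 1) = 0))]
      ring
  · have h0 : t ≠ 0 := by rintro rfl; exact h (dvd_zero N)
    rw [if_neg h, if_neg h0]
    split_ifs with h1 h2
    · exact absurd ((Nat.sub_add_cancel h1) ▸ Dvd.dvd.add h2 ⟨1, (mul_one N).symm⟩) h
    · ring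
    · ring

lemma step (N n : ℕ) (hN : 1 ≤ N) : (1 - X ^ N) * G N (n + 1) = G N n := by
  ext t
  rw [coeff_one_sub_pow_mul, coeff_G, coeff_G, coeff_G]
  by_cases h : N ∣ t
  · rcases h with ⟨m, rfl⟩
    have hdiv : N * m / N = m := Nat.mul_div_cancel_left m (by omega)
    rcases m with _ | m'
    · rw [Nat.mul_zero]
      rw [if_pos (dvd_zero N), if_pos (dvd_zero N), if_neg (by omega : ¬ N ≤ 0)]
      simp
    · have hms : N * (m' + 1) = N * m' + N := by ring
      have h1 : N ≤ N * (m' + 1) := by omega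
      have hsub : N * (m' + 1) - N = N * m' := by omega
      have h2 : N ∣ N * (m' + 1) - N := hsub ▸ dvd_mul_right N m'
      have hdiv2 : (N * (m' + 1) - N) / N = m' := by
        rw [hsub, Nat.mul_div_cancel_left _ (by omega : 0 < N)]
      have hc1 : N ∣ N * (m' + 1) := dvd_mul_right N (m' + 1)
      simp only [if_pos hc1, if_pos h1, if_pos h2, hdiv, hdiv2]
      rw [show m' + 1 + (n + 1) = m' + (n + 1) + 1 by omega, Nat.choose_succ_succ,
        show m' + 1 + n = m' + (n + 1) by omega]
      push_cast
      ring
  · rw [if_neg h, if_neg h]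
    split_ifs with h1 h2
    · exact absurd ((Nat.sub_add_cancel h1) ▸ Dvd.dvd.add h2 ⟨1, (mul_one N).symm⟩) h
    · ring
    · ring

lemma inv_G (N n : ℕ) (hN : 1 ≤ N) : (1 - X ^ N) ^ (n + 1) * G N n = 1 := by
  induction n with
  | zero => rw [pow_one]; exact base N hN
  | succ n ih =>
    calc (1 - X ^ N) ^ (n + 2) * G N (n + 1)
        = (1 - X ^ N) ^ (n + 1) * ((1 - X ^ N) * G N (n + 1)) := by ring
      _ = (1 - X ^ N) ^ (n + 1) * G N n := by rw [step N n hN]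
      _ = 1 := ih

lemma F_eq (N n : ℕ) (hN : 1 ≤ N) (p : Polynomial ℚ) (F : PowerSeries ℚ)
    (hF : (1 - X ^ N) ^ (n + 1) * F = (p : PowerSeries ℚ)) :
    F = (p : PowerSeries ℚ) * G N n := by
  calc F = ((1 - X ^ N) ^ (n + 1) * G N n) * F := by rw [inv_G N n hN, one_mul]
    _ = (((1 - X ^ N) ^ (n + 1)) * F) * G N n := by ring
    _ = (p : PowerSeries ℚ) * G N n := by rw [hF]

/-- the basic polynomial whose evaluation at `M` gives `(M - r + n).choose n` for `M ≥ r`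
and `0` for `M < r ≤ n`. -/
noncomputable def B (n r : ℕ) : Polynomial ℚ :=
  Polynomial.C ((n.factorial : ℚ)⁻¹) *
    ∏ i ∈ range n, (Polynomial.X + Polynomial.C ((i : ℚ) + 1 - r))

lemma prod_asc (m n : ℕ) : ∏ i ∈ range n, ((m : ℚ) + i + 1) = ((m + 1).ascFactorial n : ℚ) := by
  induction n with
  | zero => simp
  | succ n ih =>
    rw [Finset.prod_range_succ, ih, Nat.ascFactorial_succ]
    push_cast
    ring

lemma eval_B (n r M : ℕ) (hr : r ≤ n) :
    (B n r).eval (M : ℚ) = if r ≤ M then ((M - r + n).choose n : ℚ) else 0 := by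
  rw [B, Polynomial.eval_mul, Polynomial.eval_C, Polynomial.eval_prod]
  simp only [Polynomial.eval_add, Polynomial.eval_X, Polynomial.eval_C]
  split_ifs with hrM
  · have : ∏ i ∈ range n, ((M : ℚ) + ((i : ℚ) + 1 - r)) = ∏ i ∈ range n, (((M - r : ℕ) : ℚ) + i + 1) := by
      apply Finset.prod_congr rfl
      intro i _
      have : ((M - r : ℕ) : ℚ) = (M : ℚ) - r := by
        push_cast [Nat.cast_sub hrM]; ring
      rw [this]; ring
    rw [this, prod_asc, Nat.ascFactorial_eq_factorial_mul_choose]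
    have h2 : (M - r + n) = (M - r) + n := rfl
    push_cast
    field_simp
  · apply mul_eq_zero_of_right
    apply Finset.prod_eq_zero (i := r - M - 1)
    · exact Finset.mem_range.mpr (by omega)
    · have h5 : (r - M - 1 : ℕ) = r - (M + 1) := by omega
      have h6 : ((r - M - 1 : ℕ) : ℚ) = (r : ℚ) - M - 1 := by
        rw [h5, Nat.cast_sub (by omega : M + 1 ≤ r)]
        push_cast; ring
      rw [h6]; ring

/-- Key coefficient formula. -/
lemma coeff_formula (N n : ℕ) (hN : 1 ≤ N) (p : Polynomial ℚ)
    (hp : p.degree < (N * (n + 1) : ℕ)) (F : PowerSeries ℚ)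
    (hF : (1 - X ^ N) ^ (n + 1) * F = (p : PowerSeries ℚ)) (t : ℕ) :
    PowerSeries.coeff (R := ℚ) t F =
      ∑ r ∈ range (n + 1), p.coeff (t % N + N * r) * (B n r).eval ((t / N : ℕ) : ℚ) := by
  have hN0 : 0 < N := hN
  set j := t % N with hj
  set M := t / N with hM
  have hteq : N * M + j = t := Nat.div_add_mod t N
  have hjN : j < N := Nat.mod_lt t hN0
  rw [F_eq N n hN p F hF, PowerSeries.coeff_mul]
  rw [Finset.Nat.sum_antidiagonal_eq_sum_range_succ_mk]
  -- restrict to relevant indices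
  have hstep1 : ∑ k ∈ range (t + 1), (PowerSeries.coeff (R := ℚ) k) (p : PowerSeries ℚ) *
        (PowerSeries.coeff (R := ℚ) (t - k)) (G N n)
      = ∑ k ∈ (range (t + 1)).filter (fun k => k % N = j ∧ k < N * (n + 1)),
        (PowerSeries.coeff (R := ℚ) k) (p : PowerSeries ℚ) * (PowerSeries.coeff (R := ℚ) (t - k)) (G N n) := by
    rw [Finset.sum_filter_of_ne]
    intro k hk hne
    constructor
    · -- k % N = j
      by_contra hmod
      apply hne
      have hnd : ¬ N ∣ (t - k) := by
        rintro ⟨c, hc⟩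
        have hkt : k ≤ t := Nat.lt_succ_iff.mp (Finset.mem_range.mp hk)
        have ht' : t = k + N * c := by omega
        apply hmod
        rw [hj, ht', Nat.add_mul_mod_self_left]
      rw [coeff_G, if_neg hnd, mul_zero]
    · -- k < N * (n+1)
      by_contra hdeg
      apply hne
      rw [Polynomial.coeff_coe, Polynomial.coeff_eq_zero_of_degree_lt, zero_mul]
      exact hp.trans_le (Nat.cast_le.mpr (by omega))
  rw [hstep1]
  have hstep2 : ∑ k ∈ (range (t + 1)).filter (fun k => k % N = j ∧ k < N * (n + 1)),
        (PowerSeries.coeff (R := ℚ) k) (p : PowerSeries ℚ) * (PowerSeries.coeff (R := ℚ) (t - k)) (G N n)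
      = ∑ r ∈ (range (n + 1)).filter (fun r => r ≤ M),
        p.coeff (j + N * r) * ((M - r + n).choose n : ℚ) := by
    apply Finset.sum_nbij' (i := fun k => k / N) (j := fun r => j + N * r)
    · intro k hk
      simp only [Finset.mem_filter, Finset.mem_range] at hk ⊢
      obtain ⟨hk1, hk2, hk3⟩ := hk
      have hkeq : N * (k / N) + j = k := by rw [← hk2]; exact Nat.div_add_mod k N
      constructor
      · have h4 : N * (k / N) < N * (n + 1) := by omega
        exact Nat.lt_of_mul_lt_mul_left h4
      · -- k / N ≤ M
        have : N * (k / N) ≤ N * M := by omega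
        exact Nat.le_of_mul_le_mul_left this hN0
    · intro r hr
      simp only [Finset.mem_filter, Finset.mem_range] at hr ⊢
      obtain ⟨hr1, hr2⟩ := hr
      have : N * r ≤ N * M := Nat.mul_le_mul_left N hr2
      refine ⟨by omega, ?_, ?_⟩
      · rw [Nat.add_mul_mod_self_left, Nat.mod_eq_of_lt hjN]
      · have h7 : N * r ≤ N * n := Nat.mul_le_mul_left N (by omega)
        have h8 : N * (n + 1) = N * n + N := by ring
        omega
    · intro k hk
      simp only [Finset.mem_filter, Finset.mem_range] at hk
      obtain ⟨hk1, hk2, hk3⟩ := hk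
      conv_rhs => rw [← Nat.div_add_mod k N]
      rw [hk2]; ring
    · intro r hr
      simp only [Finset.mem_filter, Finset.mem_range] at hr
      rw [Nat.add_mul_div_left _ _ hN0, Nat.div_eq_of_lt hjN]
      omega
    · intro k hk
      simp only [Finset.mem_filter, Finset.mem_range] at hk
      obtain ⟨hk1, hk2, hk3⟩ := hk
      set r := k / N with hrdef
      have hkeq : N * r + j = k := by rw [hrdef, ← hk2]; exact Nat.div_add_mod k N
      have hrM : r ≤ M := by
        have : N * r ≤ N * M := by omega
        exact Nat.le_of_mul_le_mul_left this hN0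
      have hsub : t - k = N * (M - r) := by
        have : N * (M - r) + N * r = N * M := by
          rw [← Nat.mul_add]; congr 1; omega
        omega
      rw [coeff_G, Polynomial.coeff_coe]
      have hdvd2 : N ∣ t - k := hsub ▸ dvd_mul_right N (M - r)
      rw [if_pos hdvd2]
      have hdiv : (t - k) / N = M - r := by
        rw [hsub, Nat.mul_div_cancel_left _ hN0]
      rw [hdiv, show j + N * r = k by omega]
  rw [hstep2]
  rw [Finset.sum_filter]
  apply Finset.sum_congr rfl
  intro r hr
  have hr' : r < n + 1 := Finset.mem_range.mp hr
  rw [eval_B n r M (by omega : r ≤ n)]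
  split_ifs with h
  · rfl
  · rw [mul_zero]

end FSDCaux

theorem finite_set_determines_coeffs (N n : ℕ) (hN : 1 ≤ N) (A : Finset ℕ)
    (hA : ∀ j < N, n + 1 ≤ (A.filter fun k => k % N = j).card) (ℓ : ℕ) :
    ∃ c : ℕ → ℚ, ∀ F : PowerSeries ℚ,
      (∃ p : Polynomial ℚ, p.degree < (N * (n + 1) : ℕ) ∧
        (1 - PowerSeries.X ^ N) ^ (n + 1) * F = (p : PowerSeries ℚ)) →
      PowerSeries.coeff (R := ℚ) ℓ F = ∑ k ∈ A, c k * PowerSeries.coeff (R := ℚ) k F := by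
  classical
  have hN0 : 0 < N := hN
  set j := ℓ % N with hj
  have hjN : j < N := Nat.mod_lt ℓ hN0
  obtain ⟨s, hs_sub, hs_card⟩ := Finset.exists_subset_card_eq (hA j hjN)
  have hs_mod : ∀ k ∈ s, k % N = j := fun k hk => (Finset.mem_filter.mp (hs_sub hk)).2
  have hsA : s ⊆ A := hs_sub.trans (Finset.filter_subset _ _)
  set v : ℕ → ℚ := fun k => ((k / N : ℕ) : ℚ) with hv
  have hvinj : Set.InjOn v s := by
    intro k₁ hk₁ k₂ hk₂ heq
    have h1 : k₁ / N = k₂ / N := Nat.cast_injective heq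
    have h2 : k₁ % N = k₂ % N := by rw [hs_mod k₁ hk₁, hs_mod k₂ hk₂]
    have e1 := Nat.div_add_mod k₁ N
    have e2 := Nat.div_add_mod k₂ N
    rw [h1, h2] at e1
    omega
  refine ⟨fun k => if k ∈ s then (Lagrange.basis s v k).eval ((ℓ / N : ℕ) : ℚ) else 0, ?_⟩
  rintro F ⟨p, hp, hF⟩
  set Q : Polynomial ℚ := ∑ r ∈ Finset.range (n + 1),
    Polynomial.C (p.coeff (j + N * r)) * FSDCaux.B n r with hQ
  have hQeval : ∀ t : ℕ, t % N = j → PowerSeries.coeff (R := ℚ) t F = Q.eval ((t / N : ℕ) : ℚ) := by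
    intro t ht
    rw [FSDCaux.coeff_formula N n hN p hp F hF t, hQ]
    rw [Polynomial.eval_finset_sum]
    apply Finset.sum_congr rfl
    intro r _
    rw [Polynomial.eval_mul, Polynomial.eval_C, ht]
  have hQdeg : Q.degree < (s.card : ℕ) := by
    rw [hs_card]
    apply lt_of_le_of_lt (Polynomial.degree_sum_le _ _)
    rw [Finset.sup_lt_iff (by exact_mod_cast WithBot.bot_lt_coe (n + 1))]
    intro r _
    apply lt_of_le_of_lt (Polynomial.degree_mul_le _ _)
    have h1 : (Polynomial.C (p.coeff (j + N * r))).degree ≤ 0 := Polynomial.degree_C_le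
    have h2 : (FSDCaux.B n r).degree ≤ n := by
      rw [FSDCaux.B]
      apply le_trans (Polynomial.degree_mul_le _ _)
      have h3 : (∏ i ∈ Finset.range n, (Polynomial.X + Polynomial.C ((i : ℚ) + 1 - r))).degree ≤ (n : WithBot ℕ) := by
        rw [Polynomial.degree_prod]
        have hd1 : ∀ i ∈ Finset.range n,
            (Polynomial.X + Polynomial.C ((i : ℚ) + 1 - r)).degree = (1 : WithBot ℕ) :=
          fun i _ => Polynomial.degree_X_add_C _
        calc ∑ i ∈ Finset.range n, (Polynomial.X + Polynomial.C ((i : ℚ) + 1 - r)).degree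
            = ∑ _i ∈ Finset.range n, (1 : WithBot ℕ) := Finset.sum_congr rfl hd1
          _ ≤ (n : WithBot ℕ) := by simp
      calc (Polynomial.C ((n.factorial : ℚ)⁻¹)).degree +
            (∏ i ∈ Finset.range n, (Polynomial.X + Polynomial.C ((i : ℚ) + 1 - r))).degree
          ≤ 0 + (n : WithBot ℕ) := add_le_add Polynomial.degree_C_le h3
        _ = n := by rw [zero_add]
    calc (Polynomial.C (p.coeff (j + N * r))).degree + (FSDCaux.B n r).degree
        ≤ 0 + (n : WithBot ℕ) := add_le_add h1 h2
      _ = (n : WithBot ℕ) := by rw [zero_add]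
      _ < ((n + 1 : ℕ) : WithBot ℕ) := by exact_mod_cast Nat.lt_succ_self n
  have hinterp := Lagrange.eq_interpolate hvinj hQdeg
  have heval : ∀ x : ℚ, Q.eval x = ∑ k ∈ s, Q.eval (v k) * (Lagrange.basis s v k).eval x := by
    intro x
    conv_lhs => rw [hinterp]
    rw [Lagrange.interpolate_apply, Polynomial.eval_finset_sum]
    apply Finset.sum_congr rfl
    intro k _
    rw [Polynomial.eval_mul, Polynomial.eval_C]
  have hmain : PowerSeries.coeff (R := ℚ) ℓ F = ∑ k ∈ s,
      (Lagrange.basis s v k).eval ((ℓ / N : ℕ) : ℚ) * PowerSeries.coeff (R := ℚ) k F := by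
    rw [hQeval ℓ rfl, heval]
    apply Finset.sum_congr rfl
    intro k hk
    rw [hv]
    rw [← hQeval k (hs_mod k hk)]
    ring
  rw [hmain]
  symm
  simp only [ite_mul, zero_mul]
  rw [Finset.sum_ite_mem, Finset.inter_eq_right.mpr hsA]
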